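/- arXiv:2112.03664 — 5 statements merged into one kernel-verified Lean document; each statement's English description precedes it below -/
import Mathlib

section
/- Let p be a polynomial with complex coefficients of degree at most k with p(0) ≠ 0, and suppose that for every z ∈ ℂ with p(e^z) = 0 and every positive integer r, also p(e^{rz}) = 0. Then every root w of p satisfies w = exp(2πiν/j) for some j ∈ {1,…,k} and some ν ∈ {0,…,j−1}. -/
open Polynomial

/-- If `p` is a complex polynomial of degree at most `k` with `p 0 ≠ 0` such that
`p (e^z) = 0` implies `p (e^{r z}) = 0` for every positive integer `r`, then every
root of `p` is of the form `exp (2πiν/j)` with `1 ≤ j ≤ k` and `0 ≤ ν < j`. -/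
theorem roots_are_roots_of_unity (k : ℕ) (p : Polynomial ℂ)
    (hdeg : p.natDegree ≤ k) (h0 : p.coeff 0 ≠ 0)
    (hclosed : ∀ z : ℂ, ∀ r : ℕ, 1 ≤ r → p.eval (Complex.exp z) = 0 →
      p.eval (Complex.exp ((r : ℂ) * z)) = 0) :
    ∀ w : ℂ, p.eval w = 0 →
      ∃ j ν : ℕ, 1 ≤ j ∧ j ≤ k ∧ ν < j ∧
        w = Complex.exp (2 * Real.pi * Complex.I * ν / j) := by
  intro w hw
  have hp0 : p ≠ 0 := fun h => h0 (by simp [h])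
  have hw0 : w ≠ 0 := by
    rintro rfl
    exact h0 (by simpa [Polynomial.coeff_zero_eq_eval_zero] using hw)
  set z := Complex.log w with hz
  have hez : Complex.exp z = w := Complex.exp_log hw0
  have hroot : ∀ r : ℕ, 1 ≤ r → p.eval (Complex.exp ((r : ℂ) * z)) = 0 := by
    intro r hr
    exact hclosed z r hr (by rw [hez]; exact hw)
  -- the map r ↦ exp ((r+1) z) lands in the roots of p
  have hmem : ∀ r : Fin (k + 1), Complex.exp (((r : ℕ) + 1 : ℕ) * z) ∈ p.roots.toFinset := by
    intro r
    rw [Multiset.mem_toFinset, Polynomial.mem_roots hp0]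
    exact hroot _ (Nat.le_add_left 1 _)
  have hcard : p.roots.toFinset.card ≤ k := by
    calc p.roots.toFinset.card ≤ Multiset.card p.roots := p.roots.toFinset_card_le
    _ ≤ p.natDegree := p.card_roots'
    _ ≤ k := hdeg
  have hlt : Fintype.card ↥p.roots.toFinset < Fintype.card (Fin (k + 1)) := by
    simpa using Nat.lt_succ_of_le hcard
  obtain ⟨a, b, hab, heq⟩ := Fintype.exists_ne_map_eq_of_card_lt
    (fun r : Fin (k + 1) => (⟨_, hmem r⟩ : ↥p.roots.toFinset)) hlt
  have heq' : Complex.exp (((a : ℕ) + 1 : ℕ) * z) = Complex.exp (((b : ℕ) + 1 : ℕ) * z) :=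
    congrArg Subtype.val heq
  clear heq
  -- WLOG a < b
  wlog hlt' : (a : ℕ) < (b : ℕ) generalizing a b
  · exact this b a (Ne.symm hab) heq'.symm
      (lt_of_le_of_ne (not_lt.mp hlt') (fun h => hab (Fin.ext h.symm)))
  set d : ℕ := (b : ℕ) - (a : ℕ) with hd
  have hd1 : 1 ≤ d := Nat.le_sub_of_add_le (by omega)
  have hdk : d ≤ k := by have := b.isLt; omega
  have hsplit : ((b : ℕ) + 1 : ℕ) * z = ((a : ℕ) + 1 : ℕ) * z + (d : ℂ) * z := by
    have : ((b : ℕ) + 1 : ℕ) = ((a : ℕ) + 1 : ℕ) + d := by omega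
    rw [this]; push_cast; ring
  have hexp1 : Complex.exp ((d : ℂ) * z) = 1 := by
    have := heq'
    rw [hsplit, Complex.exp_add] at this
    have hne : Complex.exp (((a : ℕ) + 1 : ℕ) * z) ≠ 0 := Complex.exp_ne_zero _
    field_simp at this
    rw [mul_comm]; exact this.symm
  have hwd : w ^ d = 1 := by
    rw [← hez, ← Complex.exp_nat_mul, hexp1]
  have hdne : d ≠ 0 := by omega
  haveI : NeZero d := ⟨hdne⟩
  have hprim := Complex.isPrimitiveRoot_exp d hdne
  obtain ⟨i, hi, hiw⟩ := hprim.eq_pow_of_pow_eq_one hwd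
  refine ⟨d, i, hd1, hdk, hi, ?_⟩
  rw [← hiw, ← Complex.exp_nat_mul]
  congr 1
  ring
end

section
/- Let φ be a compactly supported distribution on ℝ that is not identically zero. Then there exists a nonnegative integer j such that φ applied to the monomial x ↦ x^j is nonzero. -/
open scoped Topology
open MeasureTheory

noncomputable section

/-- The space of infinitely differentiable functions `ℝ → ℝ`, as a submodule of `ℝ → ℝ`. -/
def SmoothR : Submodule ℝ (ℝ → ℝ) where
  carrier := {f | ContDiff ℝ (⊤ : ℕ∞) f}
  add_mem' {f g} hf hg := by exact ContDiff.add (Set.mem_setOf_eq ▸ hf) (Set.mem_setOf_eq ▸ hg)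
  zero_mem' := by exact (contDiff_const : ContDiff ℝ (⊤ : ℕ∞) fun _ : ℝ => (0:ℝ))
  smul_mem' c f hf := by
    have hf' : ContDiff ℝ (⊤ : ℕ∞) f := hf
    show ContDiff ℝ (⊤ : ℕ∞) (c • f)
    exact hf'.const_smul c

/-- Distributions: linear functionals on smooth functions. -/
abbrev DistR := SmoothR →ₗ[ℝ] ℝ

/-- A distribution vanishes on an open set `U` if it kills every smooth function
supported in `U`. -/
def VanishesOn (T : DistR) (U : Set ℝ) : Prop :=
  ∀ f : SmoothR, tsupport (f : ℝ → ℝ) ⊆ U → T f = 0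

/-- The support of a distribution: complement of the largest open set on which it vanishes. -/
def distSupp (T : DistR) : Set ℝ :=
  {x : ℝ | ¬ ∃ U : Set ℝ, IsOpen U ∧ x ∈ U ∧ VanishesOn T U}

/-- The continuity/compact support estimate characterizing members of `𝓔'(ℝ)`:
a compactly supported distribution of finite order. -/
def IsCompactDist (T : DistR) : Prop :=
  ∃ (K : Set ℝ) (C : ℝ) (N : ℕ), IsCompact K ∧
    ∀ f : SmoothR, |T f| ≤ C * ⨆ (j : Fin (N + 1)) (x : K), |iteratedDeriv j (f : ℝ → ℝ) x|

/-- The monomial `x ↦ x ^ j` as a smooth function. -/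
lemma mem_smoothR {f : ℝ → ℝ} : f ∈ SmoothR ↔ ContDiff ℝ (⊤ : ℕ∞) f := Iff.rfl

def monomialS (j : ℕ) : SmoothR := ⟨fun x => x ^ j, mem_smoothR.mpr (contDiff_id.pow j)⟩

def derivSmooth (f : SmoothR) : SmoothR :=
  ⟨deriv (f : ℝ → ℝ), mem_smoothR.mpr (contDiff_infty_iff_deriv.mp (mem_smoothR.mp f.2)).2⟩

/-- Differentiation as a linear map on smooth functions. -/
def derivLM : SmoothR →ₗ[ℝ] SmoothR where
  toFun := derivSmooth
  map_add' f g := Subtype.ext (by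
    funext x
    exact deriv_add (((mem_smoothR.mp f.2).differentiable (by simp)).differentiableAt)
      (((mem_smoothR.mp g.2).differentiable (by simp)).differentiableAt))
  map_smul' c f := Subtype.ext (by
    funext x
    exact deriv_const_smul c (((mem_smoothR.mp f.2).differentiable (by simp)).differentiableAt))

/-- Distributional derivative: `(D T) f = -T f'`. -/
def Dop (T : DistR) : DistR := -(T ∘ₗ derivLM)

/-- Iterated distributional derivative. -/
def Dpow (m : ℕ) : DistR → DistR := Dop^[m]

/-- Precomposition of a smooth function with the affine map `x ↦ (x + h) / l`. -/
def affineMapS (l h : ℝ) (f : SmoothR) : SmoothR :=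
  ⟨fun x => (f : ℝ → ℝ) ((x + h) / l),
    mem_smoothR.mpr ((mem_smoothR.mp f.2).comp ((contDiff_id.add contDiff_const).div_const l))⟩

def compAffine (l h : ℝ) : SmoothR →ₗ[ℝ] SmoothR where
  toFun := affineMapS l h
  map_add' f g := Subtype.ext rfl
  map_smul' c f := Subtype.ext rfl

/-- The affine pullback `φ(l·−h)` of a distribution `φ`, acting by
`⟨φ(l·−h), f⟩ = |l|⁻¹ ⟨φ, f((·+h)/l)⟩`. -/
def affinePullD (l h : ℝ) (T : DistR) : DistR := |l|⁻¹ • (T ∘ₗ compAffine l h)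

/-- The Dirac distribution at a point. -/
def diracD (a : ℝ) : DistR where
  toFun f := (f : ℝ → ℝ) a
  map_add' f g := rfl
  map_smul' c f := rfl


open Polynomial in
lemma contDiff_polyEval (p : ℝ[X]) : ContDiff ℝ (⊤ : ℕ∞) (fun x : ℝ => p.eval x) := by
  induction p using Polynomial.induction_on' with
  | add p q hp hq => simpa [Polynomial.eval_add] using hp.add hq
  | monomial n a =>
      simpa [Polynomial.eval_monomial] using
        (contDiff_const (c := a)).mul (contDiff_id.pow n)

open Polynomial in
def polyS (p : ℝ[X]) : SmoothR := ⟨fun x => p.eval x, mem_smoothR.mpr (contDiff_polyEval p)⟩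

open Polynomial in
lemma phi_polyS (φ : DistR) (hm : ∀ j, φ (monomialS j) = 0) (p : ℝ[X]) : φ (polyS p) = 0 := by
  induction p using Polynomial.induction_on' with
  | add p q hp hq =>
      have h : polyS (p + q) = polyS p + polyS q :=
        Subtype.ext (funext fun x => by simp [polyS])
      rw [h, map_add, hp, hq, add_zero]
  | monomial n a =>
      have h : polyS (Polynomial.monomial n a) = a • monomialS n :=
        Subtype.ext (funext fun x => by
          simp [polyS, monomialS, Polynomial.eval_monomial])
      rw [h, LinearMap.map_smul, hm, smul_zero]

open Polynomial in
def antider (p : ℝ[X]) : ℝ[X] := p.sum fun k c => Polynomial.C (c / (k+1)) * Polynomial.X ^ (k+1)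

open Polynomial in
lemma derivative_antider (p : ℝ[X]) : Polynomial.derivative (antider p) = p := by
  unfold antider
  rw [Polynomial.sum_def, map_sum]
  conv_rhs => rw [← Polynomial.sum_C_mul_X_pow_eq p, Polynomial.sum_def]
  refine Finset.sum_congr rfl fun k _ => ?_
  rw [Polynomial.derivative_C_mul_X_pow]
  have hk : ((k : ℝ) + 1) ≠ 0 := by positivity
  rw [Nat.add_sub_cancel]
  congr 2
  push_cast
  field_simp

open Polynomial in
lemma iteratedDeriv_polyEval (p : ℝ[X]) (n : ℕ) :
    iteratedDeriv n (fun x : ℝ => p.eval x) = fun x => (Polynomial.derivative^[n] p).eval x := by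
  induction n with
  | zero => simp
  | succ n ih =>
      rw [iteratedDeriv_succ, ih]
      funext x
      rw [Polynomial.deriv, Function.iterate_succ_apply']

open Polynomial in
lemma iteratedDeriv_sub_polyEval (f : ℝ → ℝ) (hf : ContDiff ℝ (⊤:ℕ∞) f) (p : ℝ[X]) (n : ℕ) :
    iteratedDeriv n (fun x => f x - p.eval x)
      = fun x => iteratedDeriv n f x - (Polynomial.derivative^[n] p).eval x := by
  induction n with
  | zero => simp
  | succ n ih =>
      rw [iteratedDeriv_succ, ih, iteratedDeriv_succ]
      funext x
      have h1 : DifferentiableAt ℝ (iteratedDeriv n f) x :=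
        (hf.differentiable_iteratedDeriv n (by exact_mod_cast WithTop.coe_lt_top n)).differentiableAt
      rw [deriv_fun_sub h1 (Polynomial.differentiableAt _), Polynomial.deriv,
        Function.iterate_succ_apply']

open Polynomial in
def seqPoly (f : ℝ → ℝ) (a : ℝ) (N : ℕ) (q : ℝ[X]) : ℕ → ℝ[X]
  | 0 => q
  | (m+1) => antider (seqPoly f a N q m)
      + Polynomial.C (iteratedDeriv (N - (m+1)) f a - (antider (seqPoly f a N q m)).eval a)

open Polynomial in
lemma derivative_seqPoly (f : ℝ → ℝ) (a : ℝ) (N : ℕ) (q : ℝ[X]) (m : ℕ) :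
    Polynomial.derivative (seqPoly f a N q (m+1)) = seqPoly f a N q m := by
  simp [seqPoly, derivative_antider]

open Polynomial in
lemma eval_seqPoly (f : ℝ → ℝ) (a : ℝ) (N : ℕ) (q : ℝ[X]) (m : ℕ) :
    (seqPoly f a N q (m+1)).eval a = iteratedDeriv (N - (m+1)) f a := by
  simp [seqPoly]

open Polynomial in
lemma iterate_derivative_seqPoly (f : ℝ → ℝ) (a : ℝ) (N : ℕ) (q : ℝ[X]) :
    ∀ j k, Polynomial.derivative^[j] (seqPoly f a N q (j+k)) = seqPoly f a N q k
  | 0, k => by simp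
  | (j+1), k => by
      rw [Function.iterate_succ_apply]
      have h : j + 1 + k = (j + k) + 1 := by omega
      rw [h, derivative_seqPoly, iterate_derivative_seqPoly f a N q j k]

/-- A compactly supported distribution on `ℝ` that is not identically zero has some
nonzero moment: there is `j ≥ 0` with `φ(x ↦ x^j) ≠ 0`. -/
theorem exists_moment_ne_zero (φ : DistR) (hφc : IsCompactDist φ) (hφ : φ ≠ 0) :
    ∃ j : ℕ, φ (monomialS j) ≠ 0 := by
  by_contra hmom
  push_neg at hmom
  apply hφ
  ext f
  show φ f = 0
  obtain ⟨K, C, N, hK, hest⟩ := hφc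
  obtain ⟨R, hR⟩ := hK.isBounded.subset_closedBall 0
  set M : ℝ := |R| + 1 with hMdef
  have hM1 : (1:ℝ) ≤ M := by rw [hMdef]; linarith [abs_nonneg R]
  have hKI : K ⊆ Set.Icc (-M) M := by
    refine hR.trans ?_
    rw [Real.closedBall_eq_Icc]
    have h1 : -M ≤ 0 - R := by rw [hMdef]; cases abs_cases R <;> linarith
    have h2 : 0 + R ≤ M := by rw [hMdef]; cases abs_cases R <;> linarith
    exact Set.Icc_subset_Icc h1 h2
  have hf : ContDiff ℝ (⊤:ℕ∞) (f : ℝ → ℝ) := mem_smoothR.mp f.2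
  set B : ℝ := (2*M)^N with hBdef
  have hB1 : (1:ℝ) ≤ B := by
    calc (1:ℝ) = 1^N := (one_pow N).symm
      _ ≤ (2*M)^N := pow_le_pow_left₀ (by norm_num) (by linarith) N
  have key : ∀ δ : ℝ, 0 < δ → |φ f| ≤ δ := by
    intro δ hδ
    set ε : ℝ := δ / (|C| * B + 1) with hεdef
    have hden : (0:ℝ) < |C| * B + 1 := by positivity
    have hε : 0 < ε := div_pos hδ hden
    obtain ⟨q, hq⟩ := exists_polynomial_near_of_continuousOn (-M) M
      (iteratedDeriv N (f : ℝ → ℝ))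
      ((hf.continuous_iteratedDeriv N (by exact_mod_cast le_top)).continuousOn) ε hε
    set P : Polynomial ℝ := seqPoly (f : ℝ → ℝ) (-M) N q N with hPdef
    set r : ℝ → ℝ := fun x => (f : ℝ → ℝ) x - P.eval x with hrdef
    have hr : ContDiff ℝ (⊤:ℕ∞) r := hf.sub (contDiff_polyEval P)
    have hdj : ∀ j, j ≤ N → iteratedDeriv j r
        = fun x => iteratedDeriv j (f : ℝ → ℝ) x - (seqPoly (f : ℝ → ℝ) (-M) N q (N - j)).eval x := by
      intro j hj
      have h1 := iteratedDeriv_sub_polyEval (f : ℝ → ℝ) hf P j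
      have h2 := iterate_derivative_seqPoly (f : ℝ → ℝ) (-M) N q j (N - j)
      rw [show j + (N - j) = N from by omega] at h2
      rw [hrdef, h1, hPdef, h2]
    have hzero : ∀ j, j < N → iteratedDeriv j r (-M) = 0 := by
      intro j hj
      simp only [hdj j (le_of_lt hj)]
      have h : seqPoly (f : ℝ → ℝ) (-M) N q (N - j) = seqPoly (f : ℝ → ℝ) (-M) N q ((N - j - 1) + 1) := by
        congr 1; omega
      rw [h, eval_seqPoly]
      have h2 : N - (N - j - 1 + 1) = j := by omega
      rw [h2, sub_self]
    have bound : ∀ m j, j + m = N → ∀ x ∈ Set.Icc (-M) M, |iteratedDeriv j r x| ≤ ε * (2*M)^m := by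
      intro m
      induction m with
      | zero =>
          intro j hj x hx
          have hjN : j = N := by omega
          have hd := congrFun (hdj j (by omega)) x
          rw [hjN] at hd ⊢
          simp only [hd, Nat.sub_self, seqPoly, pow_zero, mul_one]
          rw [abs_sub_comm]
          exact le_of_lt (hq x hx)
      | succ m ih =>
          intro j hj x hx
          have hj1 : (j+1) + m = N := by omega
          have hdiff : ∀ y ∈ Set.Icc (-M) M, DifferentiableAt ℝ (iteratedDeriv j r) y :=
            fun y _ => (hr.differentiable_iteratedDeriv j
              (by exact_mod_cast WithTop.coe_lt_top j)).differentiableAt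
          have hbd : ∀ y ∈ Set.Icc (-M) M, ‖deriv (iteratedDeriv j r) y‖ ≤ ε * (2*M)^m := by
            intro y hy
            rw [show deriv (iteratedDeriv j r) = iteratedDeriv (j+1) r from (iteratedDeriv_succ).symm,
              Real.norm_eq_abs]
            exact ih (j+1) hj1 y hy
          have hmem : -M ∈ Set.Icc (-M) M := Set.left_mem_Icc.mpr (by linarith)
          have hmvt := (convex_Icc (-M) M).norm_image_sub_le_of_norm_deriv_le hdiff hbd hmem hx
          rw [hzero j (by omega), sub_zero, Real.norm_eq_abs, Real.norm_eq_abs] at hmvt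
          have hxa : |x - (-M)| ≤ 2*M := by
            rw [abs_le]; exact ⟨by linarith [hx.1], by linarith [hx.2]⟩
          calc |iteratedDeriv j r x| ≤ ε * (2*M)^m * |x - (-M)| := hmvt
            _ ≤ ε * (2*M)^m * (2*M) := by
                apply mul_le_mul_of_nonneg_left hxa; positivity
            _ = ε * (2*M)^(m+1) := by ring
    set rS : SmoothR := ⟨r, mem_smoothR.mpr hr⟩ with hrS
    have hS0 : 0 ≤ ⨆ (j : Fin (N + 1)) (x : K), |iteratedDeriv j (rS : ℝ → ℝ) x| :=
      Real.iSup_nonneg fun j => Real.iSup_nonneg fun x => abs_nonneg _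
    have hSup : (⨆ (j : Fin (N + 1)) (x : K), |iteratedDeriv j (rS : ℝ → ℝ) x|) ≤ ε * B := by
      have hεB : 0 ≤ ε * B := by positivity
      refine Real.iSup_le (fun j => Real.iSup_le (fun x => ?_) hεB) hεB
      have hjle : (j : ℕ) ≤ N := Nat.lt_succ_iff.mp j.isLt
      have hb := bound (N - j) j (by omega) x (hKI x.2)
      refine hb.trans ?_
      apply mul_le_mul_of_nonneg_left _ (le_of_lt hε)
      rw [hBdef]
      exact pow_le_pow_right₀ (by linarith) (by omega)
    have h1 : φ f = φ rS := by
      have hfr : f = rS + polyS P := Subtype.ext (funext fun x => by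
        show (f : ℝ → ℝ) x = r x + P.eval x
        rw [hrdef]; ring)
      rw [hfr, map_add, phi_polyS φ hmom P, add_zero]
    rw [h1]
    calc |φ rS| ≤ C * ⨆ (j : Fin (N + 1)) (x : K), |iteratedDeriv j (rS : ℝ → ℝ) x| := hest rS
      _ ≤ |C| * ⨆ (j : Fin (N + 1)) (x : K), |iteratedDeriv j (rS : ℝ → ℝ) x| :=
          mul_le_mul_of_nonneg_right (le_abs_self C) hS0
      _ ≤ |C| * (ε * B) := mul_le_mul_of_nonneg_left hSup (abs_nonneg C)
      _ = δ * ((|C| * B) / (|C| * B + 1)) := by rw [hεdef]; ring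
      _ ≤ δ * 1 := by
          apply mul_le_mul_of_nonneg_left _ (le_of_lt hδ)
          rw [div_le_one hden]; linarith
      _ = δ := mul_one δ
  by_contra hne
  have habs : 0 < |φ f| := abs_pos.mpr hne
  have := key (|φ f| / 2) (by linarith)
  linarith


end
end

section
/- Let m ≥ 1 be an integer and let φ be a compactly supported distribution on ℝ satisfying moment conditions of order m, i.e., φ(x ↦ x^j) = 0 for all 0 ≤ j ≤ m−1. Then there exists a unique compactly supported distribution ψ such that φ equals the m-th distributional derivative of ψ. Moreover, if φ(x ↦ x^m) ≠ 0, then ψ applied to the constant function 1 is nonzero. -/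
open scoped Topology
open MeasureTheory

noncomputable section

open intervalIntegral in
lemma antiFun_hasDerivAt (a : ℝ) {g : ℝ → ℝ} (hg : Continuous g) (x : ℝ) :
    HasDerivAt (fun u => ∫ t in a..u, g t) (g x) x :=
  integral_hasDerivAt_right (hg.intervalIntegrable a x)
    (hg.stronglyMeasurable.stronglyMeasurableAtFilter) hg.continuousAt

lemma antiFun_contDiff (a : ℝ) {g : ℝ → ℝ} (hg : ContDiff ℝ (⊤ : ℕ∞) g) :
    ContDiff ℝ (⊤ : ℕ∞) (fun u => ∫ t in a..u, g t) := by
  have hd : ∀ x, HasDerivAt (fun u => ∫ t in a..u, g t) (g x) x :=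
    antiFun_hasDerivAt a hg.continuous
  have h2 : deriv (fun u => ∫ t in a..u, g t) = g := funext fun x => (hd x).deriv
  exact contDiff_infty_iff_deriv.mpr ⟨fun x => (hd x).differentiableAt, by rw [h2]; exact hg⟩

/-- Smooth antiderivative with base point `a`. -/
def antiS (a : ℝ) (f : SmoothR) : SmoothR :=
  ⟨fun u => ∫ t in a..u, (f : ℝ → ℝ) t, mem_smoothR.mpr (antiFun_contDiff a (mem_smoothR.mp f.2))⟩

lemma deriv_antiS (a : ℝ) (f : SmoothR) : derivSmooth (antiS a f) = f :=
  Subtype.ext (funext fun x =>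
    (antiFun_hasDerivAt a (mem_smoothR.mp f.2).continuous x).deriv)

lemma Dop_apply (T : DistR) (f : SmoothR) : Dop T f = -(T (derivSmooth f)) := rfl

lemma Dpow_apply (m : ℕ) (T : DistR) (f : SmoothR) :
    Dpow m T f = (-1 : ℝ) ^ m * T ((derivLM ^ m) f) := by
  induction m generalizing T with
  | zero => simp [Dpow]
  | succ n ih =>
    have h1 : Dpow (n + 1) T = Dpow n (Dop T) := Function.iterate_succ_apply Dop n T
    rw [h1, ih, Dop_apply]
    have h2 : (derivLM ^ (n + 1)) f = (derivLM ^ n) (derivSmooth f) := by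
      rw [pow_succ]; rfl
    rw [h2]
    have h3 : derivSmooth ((derivLM ^ n) f) = (derivLM ^ n) (derivSmooth f) := by
      show (derivLM * derivLM ^ n) f = (derivLM ^ n * derivLM) f
      rw [← pow_succ', pow_succ]
    ring_nf
    rw [h3]

lemma Dm_antiS (a : ℝ) (m : ℕ) (f : SmoothR) :
    (derivLM ^ m) ((antiS a)^[m] f) = f := by
  induction m with
  | zero => rfl
  | succ n ih =>
    rw [Function.iterate_succ_apply', pow_succ]
    show (derivLM ^ n) (derivSmooth (antiS a ((antiS a)^[n] f))) = f
    rw [show derivSmooth (antiS a ((antiS a)^[n] f)) = (antiS a)^[n] f from deriv_antiS _ _, ih]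

lemma Dm_surjective (m : ℕ) : Function.Surjective (derivLM ^ m : SmoothR →ₗ[ℝ] SmoothR) :=
  fun f => ⟨(antiS 0)^[m] f, Dm_antiS 0 m f⟩

lemma coe_Dm (m : ℕ) (f : SmoothR) :
    ((derivLM ^ m) f : ℝ → ℝ) = deriv^[m] (f : ℝ → ℝ) := by
  induction m generalizing f with
  | zero => rfl
  | succ n ih =>
    rw [Function.iterate_succ_apply, pow_succ]
    exact ih (derivSmooth f)

lemma smooth_diff (f : SmoothR) : Differentiable ℝ (f : ℝ → ℝ) :=
  (mem_smoothR.mp f.2).differentiable (by simp)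

/-- A smooth function with vanishing `m`-th derivative is a polynomial of degree `< m`. -/
lemma poly_of_deriv_zero (m : ℕ) :
    ∀ f : ℝ → ℝ, ContDiff ℝ (⊤ : ℕ∞) f → deriv^[m] f = 0 →
      ∃ c : ℕ → ℝ, f = fun x => ∑ j ∈ Finset.range m, c j * x ^ j := by
  induction m with
  | zero =>
    intro f _ h0
    exact ⟨fun _ => 0, by funext x; simp at h0; simp [h0]⟩
  | succ n ih =>
    intro f hf h0
    have hdf : ContDiff ℝ (⊤ : ℕ∞) (deriv f) := (contDiff_infty_iff_deriv.mp hf).2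
    have h0' : deriv^[n] (deriv f) = 0 := by
      rw [← Function.iterate_succ_apply]; exact h0
    obtain ⟨c, hc⟩ := ih (deriv f) hdf h0'
    set g : ℝ → ℝ := fun x => ∑ j ∈ Finset.range n, c j / (j + 1) * x ^ (j + 1) with hg
    have hgd : ∀ x, HasDerivAt g (deriv f x) x := by
      intro x
      rw [hc]
      have : ∀ j ∈ Finset.range n, HasDerivAt (fun x : ℝ => c j / (j + 1) * x ^ (j + 1))
          (c j * x ^ j) x := by
        intro j _
        have := (hasDerivAt_pow (j + 1) x).const_mul (c j / (j + 1))
        refine this.congr_deriv ?_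
        push_cast
        rw [← mul_assoc, div_mul_cancel₀ _ (by positivity)]
      simpa using HasDerivAt.fun_sum this
    have hfg : ∀ x, f x - g x = f 0 - g 0 := by
      intro x
      have hdiff : ∀ y, HasDerivAt (fun x => f x - g x) 0 y := fun y => by
        simpa using ((hf.differentiable (by simp)) y).hasDerivAt.fun_sub (hgd y)
      exact is_const_of_deriv_eq_zero
        (fun y => (hdiff y).differentiableAt) (fun y => (hdiff y).deriv) x 0
    refine ⟨fun j => if j = 0 then f 0 - g 0 else c (j - 1) / (j - 1 + 1), ?_⟩
    funext x
    rw [Finset.sum_range_succ']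
    simp only [Nat.succ_ne_zero, if_false, if_true, Nat.add_sub_cancel, pow_zero, mul_one,
      if_pos rfl]
    have hx : f x = (f x - g x) + g x := by ring
    have h0g : g 0 = 0 := Finset.sum_eq_zero fun j _ => by simp
    rw [hx, hfg x, h0g, hg]
    rw [add_comm, sub_zero]
    congr 1
    refine Finset.sum_congr rfl fun j _ => ?_
    norm_num [Nat.add_sub_cancel]

lemma phi_ker {m : ℕ} {φ : DistR} (hmom : ∀ j : ℕ, j < m → φ (monomialS j) = 0)
    (f : SmoothR) (hf : (derivLM ^ m) f = 0) : φ f = 0 := by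
  have h0 : deriv^[m] (f : ℝ → ℝ) = 0 := by
    rw [← coe_Dm, hf]; rfl
  obtain ⟨c, hc⟩ := poly_of_deriv_zero m (f : ℝ → ℝ) (mem_smoothR.mp f.2) h0
  have hfs : f = ∑ j ∈ Finset.range m, c j • monomialS j := by
    apply Subtype.ext
    rw [hc]
    funext x
    have : ((∑ j ∈ Finset.range m, c j • monomialS j : SmoothR) : ℝ → ℝ)
        = ∑ j ∈ Finset.range m, c j • (monomialS j : ℝ → ℝ) := by
      push_cast; rfl
    rw [this, Finset.sum_apply]
    rfl
  rw [hfs, map_sum]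
  exact Finset.sum_eq_zero fun j hj => by
    rw [_root_.map_smul, hmom j (Finset.mem_range.mp hj), smul_zero]

lemma deriv_monomialS (j : ℕ) : derivSmooth (monomialS (j + 1)) = ((j : ℝ) + 1) • monomialS j := by
  apply Subtype.ext
  funext x
  show deriv (fun x : ℝ => x ^ (j + 1)) x = ((j : ℝ) + 1) • x ^ j
  rw [deriv_pow_field]
  push_cast
  simp [smul_eq_mul]

lemma Dm_monomialS (m : ℕ) : (derivLM ^ m) (monomialS m) = (m.factorial : ℝ) • monomialS 0 := by
  induction m with
  | zero => simp
  | succ n ih =>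
    have h1 : (derivLM ^ (n + 1)) (monomialS (n + 1))
        = (derivLM ^ n) (derivSmooth (monomialS (n + 1))) := by rw [pow_succ]; rfl
    rw [h1, deriv_monomialS, _root_.map_smul, ih, smul_smul, Nat.factorial_succ]
    push_cast
    ring_nf

lemma smooth_cont (f : SmoothR) : Continuous (f : ℝ → ℝ) := (mem_smoothR.mp f.2).continuous

lemma bddAbove_icc (a b : ℝ) (g : ℝ → ℝ) (hg : Continuous g) :
    BddAbove (Set.range fun t : Set.Icc a b => |g t|) := by
  rw [show (Set.range fun t : Set.Icc a b => |g t|) = (fun t => |g t|) '' Set.Icc a b from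
    (Set.image_eq_range (fun t => |g t|) (Set.Icc a b)).symm]
  exact isCompact_Icc.bddAbove_image (hg.abs.continuousOn)

lemma le_supIcc (a b : ℝ) (g : ℝ → ℝ) (hg : Continuous g) {x : ℝ} (hx : x ∈ Set.Icc a b) :
    |g x| ≤ ⨆ t : Set.Icc a b, |g t| :=
  le_ciSup (bddAbove_icc a b g hg) (⟨x, hx⟩ : Set.Icc a b)

lemma supIcc_nonneg (a b : ℝ) (g : ℝ → ℝ) : 0 ≤ ⨆ t : Set.Icc a b, |g t| :=
  Real.iSup_nonneg fun t => abs_nonneg _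

lemma deriv_coe_antiS (a : ℝ) (g : SmoothR) :
    deriv ((antiS a g : ℝ → ℝ)) = (g : ℝ → ℝ) :=
  congrArg (Subtype.val : SmoothR → ℝ → ℝ) (deriv_antiS a g)

lemma deriv_iter_antiS (a : ℝ) (f : SmoothR) (k : ℕ) :
    ∀ j, deriv^[j] (((antiS a)^[j + k] f : ℝ → ℝ)) = (((antiS a)^[k] f : ℝ → ℝ)) := by
  intro j
  induction j with
  | zero => rw [Nat.zero_add]; rfl
  | succ n ih =>
    have h1 : (antiS a)^[n + 1 + k] f = antiS a ((antiS a)^[n + k] f) := by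
      rw [show n + 1 + k = (n + k) + 1 by ring, Function.iterate_succ_apply']
    rw [Function.iterate_succ_apply, h1, deriv_coe_antiS, ih]

lemma anti_growth (a b : ℝ) (hab : a ≤ b) (f : SmoothR) (k : ℕ) :
    ∀ x ∈ Set.Icc a b, |((antiS a)^[k] f : ℝ → ℝ) x|
      ≤ (b - a) ^ k * ⨆ t : Set.Icc a b, |(f : ℝ → ℝ) t| := by
  induction k with
  | zero =>
    intro x hx
    simpa using le_supIcc a b _ (smooth_cont f) hx
  | succ n ih =>
    intro x hx
    have h1 : (antiS a)^[n + 1] f = antiS a ((antiS a)^[n] f) := Function.iterate_succ_apply' _ _ _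
    rw [h1]
    set S := ⨆ t : Set.Icc a b, |(f : ℝ → ℝ) t| with hS
    have hSnn : 0 ≤ S := supIcc_nonneg a b _
    have hCnn : 0 ≤ (b - a) ^ n * S := mul_nonneg (pow_nonneg (by linarith [hx.1, hx.2]) n) hSnn
    have key : |∫ t in a..x, ((antiS a)^[n] f : ℝ → ℝ) t| ≤ (b - a) ^ n * S * |x - a| := by
      rw [← Real.norm_eq_abs]
      apply intervalIntegral.norm_integral_le_of_norm_le_const
      intro t ht
      rw [Set.uIoc_of_le hx.1] at ht
      rw [Real.norm_eq_abs]
      exact ih t ⟨le_of_lt ht.1, le_trans ht.2 hx.2⟩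
    calc |(antiS a ((antiS a)^[n] f) : ℝ → ℝ) x| = |∫ t in a..x, ((antiS a)^[n] f : ℝ → ℝ) t| := rfl
      _ ≤ (b - a) ^ n * S * |x - a| := key
      _ ≤ (b - a) ^ n * S * (b - a) := by
          apply mul_le_mul_of_nonneg_left _ hCnn
          rw [abs_of_nonneg (by linarith [hx.1])]
          linarith [hx.2]
      _ = (b - a) ^ (n + 1) * S := by ring

/-- If `φ` is a compactly supported distribution satisfying moment conditions of order
`m ≥ 1`, there is a unique compactly supported distribution `ψ` with `D^m ψ = φ`;
moreover if `φ(x ↦ x^m) ≠ 0` then `ψ(1) ≠ 0`. -/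
theorem antiderivative_exists_unique (m : ℕ) (hm : 1 ≤ m) (φ : DistR)
    (hφc : IsCompactDist φ) (hmom : ∀ j : ℕ, j < m → φ (monomialS j) = 0) :
    (∃! ψ : DistR, IsCompactDist ψ ∧ Dpow m ψ = φ) ∧
    (φ (monomialS m) ≠ 0 →
      ∀ ψ : DistR, IsCompactDist ψ → Dpow m ψ = φ → ψ (monomialS 0) ≠ 0) := by
  classical
  set Dm : SmoothR →ₗ[ℝ] SmoothR := derivLM ^ m with hDmdef
  have hsurj : Function.Surjective Dm := Dm_surjective m
  have key : ∀ u v : SmoothR, Dm u = Dm v → φ u = φ v := by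
    intro u v h
    have h0 : φ (u - v) = 0 := phi_ker hmom (u - v) (by rw [map_sub, h, sub_self])
    rw [map_sub] at h0; linarith
  have hsq : ((-1:ℝ) ^ m) * ((-1:ℝ) ^ m) = 1 := by
    rw [← pow_add]; exact Even.neg_one_pow ⟨m, rfl⟩
  have formula : ∀ ψ : DistR, Dpow m ψ = φ → ∀ f : SmoothR, ψ (Dm f) = (-1:ℝ) ^ m * φ f := by
    intro ψ hψ f
    have h1 : φ f = (-1:ℝ) ^ m * ψ (Dm f) := by
      rw [← hψ, Dpow_apply]
    rw [h1, ← mul_assoc, hsq, one_mul]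
  set s : SmoothR → SmoothR := Function.surjInv hsurj with hsdef
  have hs : ∀ g, Dm (s g) = g := fun g => Function.surjInv_eq hsurj g
  let ψ0 : DistR :=
    { toFun := fun g => (-1:ℝ) ^ m * φ (s g)
      map_add' := fun g g' => by
        have h : φ (s (g + g')) = φ (s g + s g') := key _ _ (by rw [hs, map_add, hs, hs])
        simp only [h, map_add]; ring
      map_smul' := fun c g => by
        have h : φ (s (c • g)) = φ (c • s g) := key _ _ (by rw [hs, _root_.map_smul, hs])
        simp only [h, _root_.map_smul, smul_eq_mul, RingHom.id_apply]; ring }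
  have hψ0 : ∀ g f, Dm f = g → ψ0 g = (-1:ℝ) ^ m * φ f := by
    intro g f hf
    show (-1:ℝ) ^ m * φ (s g) = (-1:ℝ) ^ m * φ f
    rw [key (s g) f (by rw [hs, hf])]
  have hDψ0 : Dpow m ψ0 = φ := by
    apply LinearMap.ext; intro f
    rw [Dpow_apply]
    have h : ψ0 ((derivLM ^ m) f) = (-1:ℝ) ^ m * φ f := hψ0 _ f rfl
    rw [h, ← mul_assoc, hsq, one_mul]
  -- compactness of ψ0
  obtain ⟨K, C, N, hK, hφb⟩ := hφc
  obtain ⟨r0, hr0⟩ := (Metric.isBounded_iff_subset_closedBall (0:ℝ)).mp hK.isBounded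
  set r : ℝ := max r0 0 with hrdef
  have hr : 0 ≤ r := le_max_right _ _
  have hKab : K ⊆ Set.Icc (-r) r := by
    intro x hx
    have h1 : x ∈ Metric.closedBall (0:ℝ) r :=
      Metric.closedBall_subset_closedBall (le_max_left _ _) (hr0 hx)
    rw [Real.closedBall_eq_Icc] at h1
    simpa using h1
  set a : ℝ := -r
  set b : ℝ := r
  have hab : a ≤ b := by simp only [a, b]; linarith
  set M : ℝ := (max 1 (b - a)) ^ m with hMdef
  have hM1 : (1:ℝ) ≤ M := one_le_pow₀ (le_max_left _ _)
  have hMnn : (0:ℝ) ≤ M := le_trans zero_le_one hM1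
  have hψ0c : IsCompactDist ψ0 := by
    refine ⟨Set.Icc a b, max C 0 * M, N, isCompact_Icc, ?_⟩
    intro f
    set S : ℝ := ⨆ (j : Fin (N + 1)) (x : Set.Icc a b), |iteratedDeriv (j:ℕ) (f : ℝ → ℝ) x|
      with hSdef
    have hSinner_nonneg : ∀ j : Fin (N + 1),
        0 ≤ ⨆ x : Set.Icc a b, |iteratedDeriv (j:ℕ) (f : ℝ → ℝ) x| :=
      fun j => supIcc_nonneg a b _
    have hSnn : 0 ≤ S := Real.iSup_nonneg hSinner_nonneg
    have hSbdd : BddAbove (Set.range fun j : Fin (N + 1) =>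
        ⨆ x : Set.Icc a b, |iteratedDeriv (j:ℕ) (f : ℝ → ℝ) x|) :=
      Finite.bddAbove_range _
    have hinner_le_S : ∀ j : Fin (N + 1),
        (⨆ x : Set.Icc a b, |iteratedDeriv (j:ℕ) (f : ℝ → ℝ) x|) ≤ S :=
      fun j => le_ciSup hSbdd j
    -- the m-fold antiderivative
    set F : SmoothR := (antiS a)^[m] f with hFdef
    have hφF : ψ0 f = (-1:ℝ) ^ m * φ F := hψ0 f F (Dm_antiS a m f)
    -- pointwise bounds on the iterated derivatives of F on K
    have hpt : ∀ (j : Fin (N + 1)) (x : K), |iteratedDeriv (j:ℕ) (F : ℝ → ℝ) x| ≤ M * S := by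
      intro j x
      have hxab : (x : ℝ) ∈ Set.Icc a b := hKab x.2
      rw [iteratedDeriv_eq_iterate]
      rcases le_or_gt (j : ℕ) m with hjm | hjm
      · -- j ≤ m : still an antiderivative
        have hrw : deriv^[(j:ℕ)] (F : ℝ → ℝ) = (((antiS a)^[m - (j:ℕ)] f : ℝ → ℝ)) := by
          have : (antiS a)^[m] f = (antiS a)^[(j:ℕ) + (m - (j:ℕ))] f := by
            rw [Nat.add_sub_cancel' hjm]
          rw [hFdef, this, deriv_iter_antiS]
        rw [hrw]
        have h1 := anti_growth a b hab f (m - (j:ℕ)) x hxab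
        refine le_trans h1 ?_
        have h2 : (b - a) ^ (m - (j:ℕ)) ≤ M := by
          calc (b - a) ^ (m - (j:ℕ)) ≤ (max 1 (b - a)) ^ (m - (j:ℕ)) :=
                pow_le_pow_left₀ (by linarith) (le_max_right _ _) _
            _ ≤ M := pow_le_pow_right₀ (le_max_left _ _) (Nat.sub_le _ _)
        have h3 : (⨆ t : Set.Icc a b, |(f : ℝ → ℝ) t|) ≤ S := by
          have : (⨆ t : Set.Icc a b, |(f : ℝ → ℝ) t|)
              = ⨆ x : Set.Icc a b, |iteratedDeriv ((0 : Fin (N + 1)):ℕ) (f : ℝ → ℝ) x| := by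
            simp [iteratedDeriv_zero]
          rw [this]
          exact hinner_le_S 0
        exact mul_le_mul h2 h3 (supIcc_nonneg a b _) hMnn
      · -- j > m : differentiate f
        have hmj : m ≤ (j : ℕ) := le_of_lt hjm
        have hrw : deriv^[(j:ℕ)] (F : ℝ → ℝ) = deriv^[(j:ℕ) - m] ((f : ℝ → ℝ)) := by
          have h1 : (j:ℕ) = ((j:ℕ) - m) + m := (Nat.sub_add_cancel hmj).symm
          have h2 : deriv^[m] (F : ℝ → ℝ) = (f : ℝ → ℝ) := by
            have := deriv_iter_antiS a f 0 m
            simpa [hFdef] using this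
          rw [hFdef] at h2 ⊢
          conv_lhs => rw [h1]
          exact (Function.iterate_add_apply deriv ((j:ℕ) - m) m _).trans (by rw [h2])
        rw [hrw, ← iteratedDeriv_eq_iterate]
        have hlt : (j:ℕ) - m < N + 1 := lt_of_le_of_lt (Nat.sub_le _ _) j.2
        have hcont : Continuous (iteratedDeriv ((j:ℕ) - m) (f : ℝ → ℝ)) := by
          rw [iteratedDeriv_eq_iterate]
          exact ((mem_smoothR.mp f.2).iterate_deriv ((j:ℕ) - m)).continuous
        have h4 : |iteratedDeriv ((j:ℕ) - m) (f : ℝ → ℝ) x| ≤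
            ⨆ t : Set.Icc a b, |iteratedDeriv ((j:ℕ) - m) (f : ℝ → ℝ) t| :=
          le_supIcc a b _ hcont hxab
        have h5 : (⨆ t : Set.Icc a b, |iteratedDeriv ((j:ℕ) - m) (f : ℝ → ℝ) t|) ≤ S := by
          have := hinner_le_S ⟨(j:ℕ) - m, hlt⟩
          simpa using this
        calc |iteratedDeriv ((j:ℕ) - m) (f : ℝ → ℝ) x| ≤ S := le_trans h4 h5
          _ = 1 * S := (one_mul S).symm
          _ ≤ M * S := mul_le_mul_of_nonneg_right hM1 hSnn
    -- assemble the estimate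
    have hT : (⨆ (j : Fin (N + 1)) (x : K), |iteratedDeriv (j:ℕ) (F : ℝ → ℝ) x|) ≤ M * S := by
      refine Real.iSup_le (fun j => Real.iSup_le (fun x => hpt j x) ?_) ?_
      · exact mul_nonneg hMnn hSnn
      · exact mul_nonneg hMnn hSnn
    have hTnn : 0 ≤ ⨆ (j : Fin (N + 1)) (x : K), |iteratedDeriv (j:ℕ) (F : ℝ → ℝ) x| :=
      Real.iSup_nonneg fun j => Real.iSup_nonneg fun x => abs_nonneg _
    have habs : |ψ0 f| = |φ F| := by
      rw [hφF, abs_mul, abs_pow, abs_neg, abs_one, one_pow, one_mul]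
    calc |ψ0 f| = |φ F| := habs
      _ ≤ C * ⨆ (j : Fin (N + 1)) (x : K), |iteratedDeriv (j:ℕ) (F : ℝ → ℝ) x| := hφb F
      _ ≤ max C 0 * ⨆ (j : Fin (N + 1)) (x : K), |iteratedDeriv (j:ℕ) (F : ℝ → ℝ) x| :=
          mul_le_mul_of_nonneg_right (le_max_left _ _) hTnn
      _ ≤ max C 0 * (M * S) := mul_le_mul_of_nonneg_left hT (le_max_right _ _)
      _ = max C 0 * M * S := by ring
  -- assemble
  constructor
  · refine ⟨ψ0, ⟨hψ0c, hDψ0⟩, ?_⟩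
    intro ψ' hψ'
    apply LinearMap.ext
    intro g
    obtain ⟨f, hf⟩ := hsurj g
    rw [← hf, formula ψ' hψ'.2 f, formula ψ0 hDψ0 f]
  · intro hφm ψ hψc hψd
    have hfac : (m.factorial : ℝ) ≠ 0 := Nat.cast_ne_zero.mpr m.factorial_ne_zero
    have hDf0 : Dm ((m.factorial : ℝ)⁻¹ • monomialS m) = monomialS 0 := by
      rw [hDmdef, _root_.map_smul, Dm_monomialS, smul_smul, inv_mul_cancel₀ hfac, one_smul]
    have h1 : ψ (monomialS 0) = (-1:ℝ) ^ m * φ ((m.factorial : ℝ)⁻¹ • monomialS m) := by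
      rw [← hDf0]; exact formula ψ hψd _
    rw [h1, _root_.map_smul]
    refine mul_ne_zero (pow_ne_zero _ (by norm_num)) ?_
    simpa [smul_eq_mul] using mul_ne_zero (inv_ne_zero hfac) hφm

end
end

section
/- If φ is a totally refinable compactly supported distribution on ℝ satisfying moment conditions of order m ≥ 1, then its m-th antiderivative D^{−m}φ is also totally refinable. -/
open scoped Topology
open MeasureTheory

noncomputable section

/-- `φ` is `p`-refinable: `φ = Σ_j c_j φ(p·−j)` for finitely many coefficients. -/
def IsRefinable (p : ℕ) (φ : DistR) : Prop :=
  ∃ (s : Finset ℤ) (c : ℤ → ℝ), φ = ∑ j ∈ s, c j • affinePullD (p : ℝ) (j : ℝ) φ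

/-- `φ` is totally refinable: it is nonzero and `p`-refinable for every integer `p ≥ 2`. -/
def TotallyRefinable (φ : DistR) : Prop :=
  φ ≠ 0 ∧ ∀ p : ℕ, 2 ≤ p → IsRefinable p φ

/-- `Dop` as a linear endomorphism of the space of distributions. -/
def DopL : DistR →ₗ[ℝ] DistR where
  toFun := Dop
  map_add' T S := by
    simp only [Dop, LinearMap.add_comp]
    abel
  map_smul' c T := by simp [Dop, LinearMap.smul_comp]

lemma dpow_eq (m : ℕ) (T : DistR) : Dpow m T = (DopL ^ m) T := by
  rw [Module.End.pow_apply]; rfl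

/-- Every smooth function has a smooth antiderivative. -/
lemma derivLM_surjective : Function.Surjective derivLM := by
  intro g
  have hg : ContDiff ℝ (⊤ : ℕ∞) (g : ℝ → ℝ) := mem_smoothR.mp g.2
  have hgc : Continuous (g : ℝ → ℝ) := hg.continuous
  set F : ℝ → ℝ := fun u => ∫ t in (0:ℝ)..u, (g : ℝ → ℝ) t with hF
  have hdF : ∀ x : ℝ, HasDerivAt F ((g : ℝ → ℝ) x) x := fun x =>
    (hgc.integral_hasStrictDerivAt 0 x).hasDerivAt
  have hdiff : Differentiable ℝ F := fun x => (hdF x).differentiableAt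
  have hderiv : deriv F = (g : ℝ → ℝ) := funext fun x => (hdF x).deriv
  have hFsm : ContDiff ℝ (⊤ : ℕ∞) F := contDiff_infty_iff_deriv.mpr ⟨hdiff, hderiv ▸ hg⟩
  refine ⟨⟨F, mem_smoothR.mpr hFsm⟩, ?_⟩
  apply Subtype.ext
  exact hderiv

lemma dop_injective : Function.Injective Dop := by
  intro T S h
  have h' : T ∘ₗ derivLM = S ∘ₗ derivLM := by
    have := congrArg Neg.neg h
    simpa [Dop] using this
  ext g
  obtain ⟨F, hF⟩ := derivLM_surjective g
  calc T g = (T ∘ₗ derivLM) F := by rw [LinearMap.comp_apply, hF]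
    _ = (S ∘ₗ derivLM) F := by rw [h']
    _ = S g := by rw [LinearMap.comp_apply, hF]

lemma dpow_injective (m : ℕ) : Function.Injective (Dpow m) :=
  Function.Injective.iterate dop_injective m

lemma derivSmooth_affine (l h : ℝ) (hl : l ≠ 0) (f : SmoothR) :
    derivSmooth (affineMapS l h f) = l⁻¹ • affineMapS l h (derivSmooth f) := by
  apply Subtype.ext
  funext x
  have hf : ContDiff ℝ (⊤ : ℕ∞) (f : ℝ → ℝ) := mem_smoothR.mp f.2
  have h1 : HasDerivAt (fun y : ℝ => (y + h) / l) (1 / l) x := by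
    simpa using ((hasDerivAt_id x).add_const h).div_const l
  have h2 : HasDerivAt (f : ℝ → ℝ) (deriv (f : ℝ → ℝ) ((x + h) / l)) ((x + h) / l) :=
    ((hf.differentiable (by simp)).differentiableAt).hasDerivAt
  have h3 : HasDerivAt (fun y => (f : ℝ → ℝ) ((y + h) / l))
      (deriv (f : ℝ → ℝ) ((x + h) / l) * (1 / l)) x := h2.comp x h1
  show deriv (fun y => (f : ℝ → ℝ) ((y + h) / l)) x
      = l⁻¹ * deriv (f : ℝ → ℝ) ((x + h) / l)
  rw [h3.deriv]
  ring

lemma dop_affine (l h : ℝ) (hl : l ≠ 0) (T : DistR) :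
    Dop (affinePullD l h T) = l • affinePullD l h (Dop T) := by
  ext f
  have key : derivSmooth (affineMapS l h f) = l⁻¹ • affineMapS l h (derivSmooth f) :=
    derivSmooth_affine l h hl f
  show -( |l|⁻¹ • (T ∘ₗ compAffine l h)) (derivLM f)
      = l • (|l|⁻¹ • ((-(T ∘ₗ derivLM)) ∘ₗ compAffine l h)) f
  have hc1 : (compAffine l h) (derivLM f) = affineMapS l h (derivSmooth f) := rfl
  have hc2 : derivLM ((compAffine l h) f) = derivSmooth (affineMapS l h f) := rfl
  simp only [LinearMap.neg_apply, LinearMap.smul_apply, LinearMap.comp_apply, hc1, hc2, key,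
    LinearMap.map_smul]
  simp only [smul_eq_mul]
  field_simp

lemma dpow_affine (l h : ℝ) (hl : l ≠ 0) (m : ℕ) (T : DistR) :
    Dpow m (affinePullD l h T) = l ^ m • affinePullD l h (Dpow m T) := by
  induction m with
  | zero => simp [Dpow]
  | succ n ih =>
    have hs : ∀ S : DistR, Dpow (n + 1) S = Dop (Dpow n S) := fun S =>
      Function.iterate_succ_apply' Dop n S
    rw [hs, ih]
    have hsm : Dop (l ^ n • affinePullD l h (Dpow n T))
        = l ^ n • Dop (affinePullD l h (Dpow n T)) := DopL.map_smul _ _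
    rw [hsm, dop_affine l h hl, smul_smul, ← hs T, pow_succ]

/-- If `φ` is a totally refinable compactly supported distribution satisfying moment
conditions of order `m ≥ 1`, then its `m`-th antiderivative `D^{-m}φ` is also
totally refinable. -/
theorem antiderivative_totally_refinable (m : ℕ) (hm : 1 ≤ m) (φ : DistR)
    (hφc : IsCompactDist φ) (hφt : TotallyRefinable φ)
    (hmom : ∀ j : ℕ, j < m → φ (monomialS j) = 0)
    (ψ : DistR) (hψc : IsCompactDist ψ) (hψ : Dpow m ψ = φ) :
    TotallyRefinable ψ := by
  obtain ⟨hφ0, hφref⟩ := hφt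
  have hinj := dpow_injective m
  constructor
  · intro h0
    apply hφ0
    rw [← hψ, h0, dpow_eq, map_zero]
  · intro p hp
    obtain ⟨s, c, hc⟩ := hφref p hp
    have hp0 : (p : ℝ) ≠ 0 := Nat.cast_ne_zero.mpr (by omega)
    have hpm : (p : ℝ) ^ m ≠ 0 := pow_ne_zero m hp0
    refine ⟨s, fun j => c j / (p : ℝ) ^ m, ?_⟩
    apply hinj
    rw [hψ, dpow_eq, map_sum]
    calc φ = ∑ j ∈ s, c j • affinePullD (p : ℝ) (j : ℝ) φ := hc
      _ = ∑ j ∈ s, (DopL ^ m) ((c j / (p : ℝ) ^ m) • affinePullD (p : ℝ) (j : ℝ) ψ) := by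
        refine Finset.sum_congr rfl fun j _ => ?_
        rw [LinearMap.map_smul, ← dpow_eq, dpow_affine _ _ hp0, hψ, smul_smul, div_mul_cancel₀ _ hpm]

end
end

section
/- Let F : P_k → 𝓔'(ℝ) satisfy conditions (i)–(iv). If F(0,1,…,k) = 0, then F(a_0,…,a_k) = 0 for all (a_0,…,a_k) ∈ P_k. -/
open scoped Topology
open MeasureTheory

noncomputable section

/-- Condition (i): the support of `F (a_0, …, a_k)` is contained in `[a_0, a_k]`. -/
def SuppCond (k : ℕ) (F : (Fin (k + 1) → ℚ) → DistR) : Prop :=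
  ∀ a : Fin (k + 1) → ℚ, StrictMono a →
    distSupp (F a) ⊆ Set.Icc (a 0 : ℝ) (a (Fin.last k) : ℝ)

/-- Condition (ii): inserting one rational knot `q` strictly between `a_0` and `a_k`
(and distinct from all knots), with `α` the increasing rearrangement of the knots
together with `q`, the distribution `F a` lies in the span of the two refined ones. -/
def SpanCond (k : ℕ) (F : (Fin (k + 1) → ℚ) → DistR) : Prop :=
  ∀ a : Fin (k + 1) → ℚ, StrictMono a → ∀ q : ℚ,
    a 0 < q → q < a (Fin.last k) → q ∉ Set.range a →
    ∀ α : Fin (k + 2) → ℚ, StrictMono α →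
      Set.range α = insert q (Set.range a) →
      F a ∈ Submodule.span ℝ {F (Fin.init α), F (Fin.tail α)}

/-- Condition (iii): translation invariance under rational shifts. -/
def TransCond (k : ℕ) (F : (Fin (k + 1) → ℚ) → DistR) : Prop :=
  ∀ a : Fin (k + 1) → ℚ, StrictMono a → ∀ τ : ℚ,
    F (fun i => a i + τ) ∈ Submodule.span ℝ {affinePullD 1 (τ : ℝ) (F a)}

/-- Condition (iv): dilation invariance under positive rational dilations. -/
def DilCond (k : ℕ) (F : (Fin (k + 1) → ℚ) → DistR) : Prop :=
  ∀ a : Fin (k + 1) → ℚ, StrictMono a → ∀ δ : ℚ, 0 < δ →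
    F (fun i => δ * a i) ∈ Submodule.span ℝ {affinePullD ((δ : ℝ))⁻¹ 0 (F a)}

lemma affinePullD_zero (l h : ℝ) : affinePullD l h (0 : DistR) = 0 := by
  simp [affinePullD]

/-- If `F` satisfies conditions (i)–(iv) and `F(0, 1, …, k) = 0`, then `F` vanishes
identically on `P_k`. -/
theorem vanishing_at_equidistant_implies_zero (k : ℕ)
    (F : (Fin (k + 1) → ℚ) → DistR)
    (h1 : SuppCond k F) (h2 : SpanCond k F) (h3 : TransCond k F) (h4 : DilCond k F)
    (h0 : F (fun i => ((i : ℕ) : ℚ)) = 0) :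
    ∀ a : Fin (k + 1) → ℚ, StrictMono a → F a = 0 := by
  classical
  intro a ha
  -- translation of a vanishing tuple vanishes
  have trans0 : ∀ c : Fin (k+1) → ℚ, StrictMono c → F c = 0 → ∀ τ : ℚ,
      F (fun i => c i + τ) = 0 := by
    intro c hc h0c τ
    have hmem := h3 c hc τ
    rw [h0c, affinePullD_zero] at hmem
    rwa [Submodule.span_zero_singleton, Submodule.mem_bot] at hmem
  -- dilation of a vanishing tuple vanishes
  have dil0 : ∀ c : Fin (k+1) → ℚ, StrictMono c → F c = 0 → ∀ δ : ℚ, 0 < δ →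
      F (fun i => δ * c i) = 0 := by
    intro c hc h0c δ hδ
    have hmem := h4 c hc δ hδ
    rw [h0c, affinePullD_zero] at hmem
    rwa [Submodule.span_zero_singleton, Submodule.mem_bot] at hmem
  have natMono : StrictMono (fun i : Fin (k+1) => ((i : ℕ) : ℚ)) := by
    intro i j hij
    show ((i:ℕ):ℚ) < ((j:ℕ):ℚ)
    exact_mod_cast (show (i:ℕ) < (j:ℕ) from hij)
  -- equidistant tuples vanish
  have equi : ∀ c d : ℚ, 0 < d → F (fun i => c + d * ((i : ℕ) : ℚ)) = 0 := by
    intro c d hd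
    have hm : StrictMono (fun i : Fin (k+1) => d * ((i:ℕ):ℚ)) := fun i j hij =>
      mul_lt_mul_of_pos_left (natMono hij) hd
    have hd0 : F (fun i : Fin (k+1) => d * ((i:ℕ):ℚ)) = 0 := dil0 _ natMono h0 d hd
    have h5 : F (fun i : Fin (k+1) => d * ((i:ℕ):ℚ) + c) = 0 := trans0 _ hm hd0 c
    have he : (fun i : Fin (k+1) => c + d * ((i:ℕ):ℚ))
        = fun i : Fin (k+1) => d * ((i:ℕ):ℚ) + c := by
      funext i; ring
    rw [he]
    exact h5
  -- strict mono integer tuples: gap estimate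
  have stepIneq : ∀ (c : Fin (k+1) → ℤ), StrictMono c → ∀ (r p : ℕ)
      (hp : p < k+1) (hr : r < k+1), p ≤ r →
      c ⟨p, hp⟩ + ((r : ℤ) - (p : ℤ)) ≤ c ⟨r, hr⟩ := by
    intro c hc r
    induction r with
    | zero =>
      intro p hp hr hpr
      have hp0 : p = 0 := by omega
      subst hp0
      simp
    | succ r ihr =>
      intro p hp hr hpr
      have hrk : r < k + 1 := by omega
      by_cases hpe : p = r + 1
      · subst hpe; simp
      · have h1 := ihr p hp hrk (by omega)
        have h2 : c ⟨r, hrk⟩ < c ⟨r+1, hr⟩ := hc (Fin.mk_lt_mk.mpr (by omega))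
        push_cast at h1 ⊢
        omega
  -- consecutive integer tuples vanish
  have consec : ∀ c : Fin (k+1) → ℤ, StrictMono c →
      c (Fin.last k) ≤ c 0 + (k:ℤ) → F (fun i => ((c i : ℤ) : ℚ)) = 0 := by
    intro c hc hle
    have hval : ∀ i : Fin (k+1), c i = c 0 + ((i:ℕ):ℤ) := by
      intro i
      have hi1 := i.isLt
      have h1 := stepIneq c hc (i:ℕ) 0 (Nat.succ_pos k) i.isLt (Nat.zero_le _)
      have h2 := stepIneq c hc k (i:ℕ) i.isLt (Nat.lt_succ_self k) (by omega)
      rw [Fin.eta] at h1 h2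
      have e0 : c ⟨0, Nat.succ_pos k⟩ = c 0 := congrArg c (Fin.ext (by simp))
      have ek : c ⟨k, Nat.lt_succ_self k⟩ = c (Fin.last k) := congrArg c (Fin.ext (by simp))
      rw [e0] at h1
      rw [ek] at h2
      omega
    have he : (fun i : Fin (k+1) => ((c i : ℤ):ℚ))
        = fun i : Fin (k+1) => ((c 0 : ℤ):ℚ) + 1 * ((i:ℕ):ℚ) := by
      funext i
      rw [hval i]
      push_cast
      ring
    rw [he]
    exact equi _ 1 one_pos
  -- main induction on the diameter of integer tuples
  have key : ∀ (n : ℕ) (c : Fin (k+1) → ℤ), StrictMono c →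
      c (Fin.last k) ≤ c 0 + (k:ℤ) + (n:ℤ) → F (fun i => ((c i : ℤ) : ℚ)) = 0 := by
    intro n
    induction n with
    | zero =>
      intro c hc hd
      exact consec c hc (by push_cast at hd; omega)
    | succ n ih =>
      intro c hc hd
      by_cases hcase : c (Fin.last k) ≤ c 0 + (k:ℤ)
      · exact consec c hc hcase
      push_neg at hcase
      have ebl : c ⟨k, Nat.lt_succ_self k⟩ = c (Fin.last k) := congrArg c (Fin.ext (by simp))
      have eb0 : c ⟨0, Nat.succ_pos k⟩ = c 0 := congrArg c (Fin.ext (by simp))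
      have hmono : ∀ (p r : ℕ) (hp : p < k+1) (hr : r < k+1), p ≤ r →
          c ⟨p, hp⟩ ≤ c ⟨r, hr⟩ :=
        fun p r hp hr hpr => hc.monotone (Fin.mk_le_mk.mpr hpr)
      -- find the first index where c deviates from consecutive
      have hex : ∃ m : ℕ, ∃ hm : m < k+1, c ⟨m, hm⟩ ≠ c 0 + (m:ℤ) := by
        refine ⟨k, Nat.lt_succ_self k, ?_⟩
        intro hk
        rw [ebl] at hk
        omega
      have hj0spec := Nat.find_spec hex
      set j0 := Nat.find hex with hj0def
      obtain ⟨hj0lt, hj0ne⟩ := hj0spec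
      have hj0le : j0 ≤ k := by omega
      have hmin : ∀ (m : ℕ), m < j0 → ∀ (hm : m < k+1), c ⟨m, hm⟩ = c 0 + (m:ℤ) := by
        intro m hmj hm
        have hmj' : m < Nat.find hex := by rw [← hj0def]; exact hmj
        have hnm := Nat.find_min hex hmj'
        push_neg at hnm
        exact hnm hm
      have hj0pos : 0 < j0 := by
        by_contra hcon
        push_neg at hcon
        have h0' : j0 = 0 := by omega
        apply hj0ne
        have e1 : (⟨j0, hj0lt⟩ : Fin (k+1)) = 0 := Fin.ext (by simp [h0'])
        rw [e1, h0']
        simp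
      have hjm1lt : j0 - 1 < k + 1 := by omega
      have hbj : c ⟨j0 - 1, hjm1lt⟩ = c 0 + ((j0 - 1 : ℕ):ℤ) := hmin (j0-1) (by omega) hjm1lt
      set q : ℤ := c 0 + (j0 : ℤ) with hqdef
      have hstep : c ⟨j0 - 1, hjm1lt⟩ < c ⟨j0, hj0lt⟩ := hc (Fin.mk_lt_mk.mpr (by omega))
      have hq2 : q < c ⟨j0, hj0lt⟩ := by
        have hcast : ((j0 - 1 : ℕ):ℤ) = (j0:ℤ) - 1 := by omega
        omega
      -- the refined knot vector
      set α : Fin (k+2) → ℤ := fun i =>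
        if (i:ℕ) < j0 then c ⟨min (i:ℕ) k, Nat.lt_succ_of_le (min_le_right _ _)⟩
        else if (i:ℕ) = j0 then q
        else c ⟨min ((i:ℕ)-1) k, Nat.lt_succ_of_le (min_le_right _ _)⟩ with hαdef
      have hαa : ∀ (i : Fin (k+2)) (m : ℕ) (hm : m < k+1), (i:ℕ) = m → m < j0 →
          α i = c ⟨m, hm⟩ := by
        intro i m hm him hmj
        have hik := i.isLt
        simp only [hαdef]
        rw [if_pos (by omega)]
        exact congrArg c (Fin.ext (show min (i:ℕ) k = m by omega))
      have hαb : ∀ (i : Fin (k+2)), (i:ℕ) = j0 → α i = q := by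
        intro i him
        simp only [hαdef]
        rw [if_neg (by omega), if_pos him]
      have hαc : ∀ (i : Fin (k+2)) (m : ℕ) (hm : m < k+1), (i:ℕ) = m + 1 → j0 ≤ m →
          α i = c ⟨m, hm⟩ := by
        intro i m hm him hmj
        have hik := i.isLt
        simp only [hαdef]
        rw [if_neg (by omega), if_neg (by omega)]
        exact congrArg c (Fin.ext (show min ((i:ℕ)-1) k = m by omega))
      have hαmono : StrictMono α := by
        intro i i' hii'
        have hlt : (i:ℕ) < (i':ℕ) := hii'
        have hik : (i:ℕ) < k+2 := i.isLt
        have hik' : (i':ℕ) < k+2 := i'.isLt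
        by_cases hb1 : (i':ℕ) < j0
        · have hi1 : (i:ℕ) < k+1 := by omega
          have hi1' : (i':ℕ) < k+1 := by omega
          rw [hαa i (i:ℕ) hi1 rfl (by omega), hαa i' (i':ℕ) hi1' rfl hb1]
          exact hc (Fin.mk_lt_mk.mpr hlt)
        · by_cases hb2 : (i':ℕ) = j0
          · have hi1 : (i:ℕ) < k+1 := by omega
            rw [hαa i (i:ℕ) hi1 rfl (by omega), hαb i' hb2]
            have hle1 := hmono (i:ℕ) (j0-1) hi1 hjm1lt (by omega)
            have hcast : ((j0 - 1 : ℕ):ℤ) = (j0:ℤ) - 1 := by omega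
            omega
          · have hb3 : j0 < (i':ℕ) := by omega
            have hi'm : (i':ℕ) - 1 < k+1 := by omega
            rw [hαc i' ((i':ℕ)-1) hi'm (by omega) (by omega)]
            by_cases hb4 : (i:ℕ) < j0
            · have hi1 : (i:ℕ) < k+1 := by omega
              rw [hαa i (i:ℕ) hi1 rfl hb4]
              exact hc (Fin.mk_lt_mk.mpr (by omega))
            · by_cases hb5 : (i:ℕ) = j0
              · rw [hαb i hb5]
                have hle2 := hmono j0 ((i':ℕ)-1) hj0lt hi'm (by omega)
                omega
              · have hb6 : j0 < (i:ℕ) := by omega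
                have hi1 : (i:ℕ) - 1 < k+1 := by omega
                rw [hαc i ((i:ℕ)-1) hi1 (by omega) (by omega)]
                exact hc (Fin.mk_lt_mk.mpr (by omega))
      have hα0 : α 0 = c ⟨0, Nat.succ_pos k⟩ := hαa 0 0 (Nat.succ_pos k) (by simp) hj0pos
      have hαlast : α (Fin.last (k+1)) = c ⟨k, Nat.lt_succ_self k⟩ :=
        hαc (Fin.last (k+1)) k (Nat.lt_succ_self k) (by simp) hj0le
      -- q is not among the knots of c
      have hqnotb : ∀ i : Fin (k+1), c i ≠ q := by
        intro i hiq
        by_cases hij : (i:ℕ) < j0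
        · have hm1 := hmin (i:ℕ) hij i.isLt
          rw [Fin.eta] at hm1
          have : (i:ℕ) < j0 := hij
          omega
        · have hm2 := hmono j0 (i:ℕ) hj0lt i.isLt (by omega)
          rw [Fin.eta] at hm2
          omega
      -- range identity at the integer level
      have hrangeZ : Set.range α = insert q (Set.range c) := by
        ext x
        simp only [Set.mem_range, Set.mem_insert_iff]
        constructor
        · rintro ⟨i, rfl⟩
          have hik : (i:ℕ) < k+2 := i.isLt
          by_cases hb4 : (i:ℕ) < j0
          · exact Or.inr ⟨⟨(i:ℕ), by omega⟩, (hαa i (i:ℕ) (by omega) rfl hb4).symm⟩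
          · by_cases hb5 : (i:ℕ) = j0
            · exact Or.inl (hαb i hb5)
            · exact Or.inr ⟨⟨(i:ℕ)-1, by omega⟩,
                (hαc i ((i:ℕ)-1) (by omega) (by omega) (by omega)).symm⟩
        · rintro (rfl | ⟨i, rfl⟩)
          · exact ⟨⟨j0, by omega⟩, hαb _ rfl⟩
          · by_cases hb4 : (i:ℕ) < j0
            · refine ⟨⟨(i:ℕ), by omega⟩, ?_⟩
              rw [hαa ⟨(i:ℕ), by omega⟩ (i:ℕ) i.isLt rfl hb4, Fin.eta]
            · refine ⟨⟨(i:ℕ)+1, by omega⟩, ?_⟩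
              rw [hαc ⟨(i:ℕ)+1, by omega⟩ (i:ℕ) i.isLt rfl (by omega), Fin.eta]
      -- now pass to ℚ and apply the span condition
      have hcQ : StrictMono (fun i : Fin (k+1) => ((c i : ℤ):ℚ)) := fun i j hij => by
        show ((c i : ℤ):ℚ) < ((c j : ℤ):ℚ)
        exact_mod_cast hc hij
      have hαmonoQ : StrictMono (fun i : Fin (k+2) => ((α i : ℤ):ℚ)) := fun i j hij => by
        show ((α i : ℤ):ℚ) < ((α j : ℤ):ℚ)
        exact_mod_cast hαmono hij
      have hlow : c 0 < q := by omega
      have hhigh : q < c (Fin.last k) := by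
        have hjk := hmono j0 k hj0lt (Nat.lt_succ_self k) hj0le
        omega
      have hlowQ : ((c 0 : ℤ):ℚ) < ((q:ℤ):ℚ) := by exact_mod_cast hlow
      have hhighQ : ((q:ℤ):ℚ) < ((c (Fin.last k) : ℤ):ℚ) := by exact_mod_cast hhigh
      have hnotinQ : ((q:ℤ):ℚ) ∉ Set.range (fun i : Fin (k+1) => ((c i : ℤ):ℚ)) := by
        rintro ⟨i, hi⟩
        have hi' : ((c i : ℤ):ℚ) = ((q:ℤ):ℚ) := hi
        exact hqnotb i (by exact_mod_cast hi')
      have hrangeQ : Set.range (fun i : Fin (k+2) => ((α i : ℤ):ℚ))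
          = insert ((q:ℤ):ℚ) (Set.range (fun i : Fin (k+1) => ((c i : ℤ):ℚ))) := by
        have e3 : (fun i : Fin (k+2) => ((α i : ℤ):ℚ)) = (fun x : ℤ => (x:ℚ)) ∘ α := rfl
        have e4 : (fun i : Fin (k+1) => ((c i : ℤ):ℚ)) = (fun x : ℤ => (x:ℚ)) ∘ c := rfl
        rw [e3, e4, Set.range_comp, Set.range_comp, hrangeZ, Set.image_insert_eq]
      have hspan := h2 (fun i : Fin (k+1) => ((c i : ℤ):ℚ)) hcQ ((q:ℤ):ℚ) hlowQ hhighQ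
        hnotinQ (fun i : Fin (k+2) => ((α i : ℤ):ℚ)) hαmonoQ hrangeQ
      -- the two refined windows vanish by the induction hypothesis
      have hinitMono : StrictMono (Fin.init α) :=
        fun i j hij => hαmono (Fin.castSucc_lt_castSucc_iff.mpr hij)
      have htailMono : StrictMono (Fin.tail α) :=
        fun i j hij => hαmono (Fin.succ_lt_succ_iff.mpr hij)
      have hinitb : Fin.init α (Fin.last k) ≤ Fin.init α 0 + (k:ℤ) + (n:ℤ) := by
        show α ((Fin.last k).castSucc) ≤ α ((0 : Fin (k+1)).castSucc) + (k:ℤ) + (n:ℤ)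
        have hlt1 : α ((Fin.last k).castSucc) < α (Fin.last (k+1)) :=
          hαmono (Fin.castSucc_lt_last _)
        rw [hαlast, ebl] at hlt1
        rw [Fin.castSucc_zero, hα0, eb0]
        push_cast at hd ⊢
        omega
      have htailb : Fin.tail α (Fin.last k) ≤ Fin.tail α 0 + (k:ℤ) + (n:ℤ) := by
        show α ((Fin.last k).succ) ≤ α ((0 : Fin (k+1)).succ) + (k:ℤ) + (n:ℤ)
        have hlt2 : α 0 < α ((0 : Fin (k+1)).succ) := hαmono (Fin.succ_pos _)
        rw [hα0, eb0] at hlt2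
        rw [Fin.succ_last, hαlast, ebl]
        push_cast at hd ⊢
        omega
      have hFinit : F (fun i : Fin (k+1) => ((Fin.init α i : ℤ):ℚ)) = 0 :=
        ih (Fin.init α) hinitMono hinitb
      have hFtail : F (fun i : Fin (k+1) => ((Fin.tail α i : ℤ):ℚ)) = 0 :=
        ih (Fin.tail α) htailMono htailb
      have e1 : Fin.init (fun i : Fin (k+2) => ((α i : ℤ):ℚ))
          = fun i : Fin (k+1) => ((Fin.init α i : ℤ):ℚ) := rfl
      have e2 : Fin.tail (fun i : Fin (k+2) => ((α i : ℤ):ℚ))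
          = fun i : Fin (k+1) => ((Fin.tail α i : ℤ):ℚ) := rfl
      rw [e1, e2, hFinit, hFtail] at hspan
      rw [Set.pair_eq_singleton, Submodule.span_zero_singleton, Submodule.mem_bot] at hspan
      exact hspan
  -- reduce the general rational case to the integer case
  obtain ⟨N, hNpos, b, hcast⟩ : ∃ N : ℕ, 0 < N ∧ ∃ b : Fin (k+1) → ℤ,
      ∀ i, ((b i : ℤ):ℚ) = (N:ℚ) * a i := by
    set P : ℕ := ∏ j, (a j).den with hPdef
    have hPpos : 0 < P := Finset.prod_pos (fun j _ => (a j).pos)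
    refine ⟨P, hPpos, fun i => (a i).num * ((P / (a i).den : ℕ) : ℤ), fun i => ?_⟩
    have hdvd : (a i).den ∣ P := by rw [hPdef]; exact Finset.dvd_prod_of_mem _ (Finset.mem_univ i)
    have hden : ((a i).den : ℚ) ≠ 0 := by exact_mod_cast (a i).den_ne_zero
    have h3q : ((a i).num : ℚ) = a i * ((a i).den : ℚ) :=
      (div_eq_iff hden).mp (Rat.num_div_den (a i))
    have h2q : ((a i).den : ℚ) * ((P / (a i).den : ℕ) : ℚ) = (P : ℚ) := by
      exact_mod_cast congrArg (fun x : ℕ => (x:ℚ)) (Nat.mul_div_cancel' hdvd)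
    have e5 : ((((a i).num * ((P / (a i).den : ℕ) : ℤ)) : ℤ) : ℚ)
        = ((a i).num : ℚ) * ((P / (a i).den : ℕ) : ℚ) := by rw [Int.cast_mul, Int.cast_natCast]
    rw [e5, h3q, mul_assoc, h2q, mul_comm]
  have hNQ : (0:ℚ) < (N:ℚ) := by exact_mod_cast hNpos
  have hbmono : StrictMono b := by
    intro i j hij
    have hq : ((b i : ℤ):ℚ) < ((b j : ℤ):ℚ) := by
      rw [hcast i, hcast j]
      exact mul_lt_mul_of_pos_left (ha hij) hNQ
    exact_mod_cast hq
  have hbz : F (fun i => ((b i : ℤ):ℚ)) = 0 :=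
    key (b (Fin.last k) - b 0).toNat b hbmono (by omega)
  have hres : F (fun i : Fin (k+1) => ((N:ℚ))⁻¹ * ((b i : ℤ):ℚ)) = 0 :=
    dil0 _ (fun i j hij => by
      show ((b i : ℤ):ℚ) < ((b j : ℤ):ℚ)
      exact_mod_cast hbmono hij) hbz ((N:ℚ))⁻¹ (inv_pos.mpr hNQ)
  have heq : (fun i : Fin (k+1) => ((N:ℚ))⁻¹ * ((b i : ℤ):ℚ)) = a := by
    funext i
    rw [hcast i, inv_mul_cancel_left₀ (ne_of_gt hNQ)]
  rw [← heq]
  exact hres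

end
end
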